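/- Let l be a nonnegative integer, k a positive integer, and q, r positive real numbers. Then L = (2l+1)πℤ × qℤ × rℤ × (qr/(2k))ℤ is a subgroup of the oscillator group G, and the map γ₂ : Λ_{k,π} → L defined by γ₂(t,x,y,z) = ((2l+1)·t, q·x, r·y, qr·z) is a group isomorphism. -/

import Mathlib

open Real

/-- The real 3-dimensional Heisenberg group, as `ℝ³` with the multiplication
`(x,y,z)·(x',y',z') = (x+x', y+y', z+z'+ (xy'-x'y)/2)`. -/
@[ext] structure Heis : Type where
  x : ℝ
  y : ℝ
  z : ℝ

namespace Heis

noncomputable instance : Mul Heis :=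
  ⟨fun a b => ⟨a.x + b.x, a.y + b.y, a.z + b.z + (a.x * b.y - b.x * a.y) / 2⟩⟩

instance : One Heis := ⟨⟨0, 0, 0⟩⟩

instance : Inv Heis := ⟨fun a => ⟨-a.x, -a.y, -a.z⟩⟩

@[simp] lemma mul_x (a b : Heis) : (a * b).x = a.x + b.x := rfl
@[simp] lemma mul_y (a b : Heis) : (a * b).y = a.y + b.y := rfl
@[simp] lemma mul_z (a b : Heis) :
    (a * b).z = a.z + b.z + (a.x * b.y - b.x * a.y) / 2 := rfl
@[simp] lemma one_x : (1 : Heis).x = 0 := rfl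
@[simp] lemma one_y : (1 : Heis).y = 0 := rfl
@[simp] lemma one_z : (1 : Heis).z = 0 := rfl
@[simp] lemma inv_x (a : Heis) : a⁻¹.x = -a.x := rfl
@[simp] lemma inv_y (a : Heis) : a⁻¹.y = -a.y := rfl
@[simp] lemma inv_z (a : Heis) : a⁻¹.z = -a.z := rfl

noncomputable instance : Group Heis where
  mul_assoc a b c := by ext <;> simp <;> ring
  one_mul a := by ext <;> simp
  mul_one a := by ext <;> simp
  inv_mul_cancel a := by ext <;> simp

end Heis

/-- The rotation action `α(t)` of `ℝ` on the Heisenberg group. -/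
noncomputable def alphaMap (t : ℝ) (v : Heis) : Heis :=
  ⟨v.x * cos t + v.y * sin t, -v.x * sin t + v.y * cos t, v.z⟩

@[simp] lemma alphaMap_x (t : ℝ) (v : Heis) :
    (alphaMap t v).x = v.x * cos t + v.y * sin t := rfl
@[simp] lemma alphaMap_y (t : ℝ) (v : Heis) :
    (alphaMap t v).y = -v.x * sin t + v.y * cos t := rfl
@[simp] lemma alphaMap_z (t : ℝ) (v : Heis) : (alphaMap t v).z = v.z := rfl

/-- The oscillator group `G = ℝ ⋉_α H₃(ℝ)`. -/
@[ext] structure Osc : Type where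
  t : ℝ
  v : Heis

namespace Osc

noncomputable instance : Mul Osc := ⟨fun a b => ⟨a.t + b.t, a.v * alphaMap a.t b.v⟩⟩
instance : One Osc := ⟨⟨0, 1⟩⟩
noncomputable instance : Inv Osc := ⟨fun a => ⟨-a.t, alphaMap (-a.t) a.v⁻¹⟩⟩

@[simp] lemma mul_t (a b : Osc) : (a * b).t = a.t + b.t := rfl
@[simp] lemma mul_v (a b : Osc) : (a * b).v = a.v * alphaMap a.t b.v := rfl
@[simp] lemma one_t : (1 : Osc).t = 0 := rfl
@[simp] lemma one_v : (1 : Osc).v = 1 := rfl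
@[simp] lemma inv_t (a : Osc) : a⁻¹.t = -a.t := rfl
@[simp] lemma inv_v (a : Osc) : a⁻¹.v = alphaMap (-a.t) a.v⁻¹ := rfl

lemma alphaMap_one (t : ℝ) : alphaMap t (1 : Heis) = 1 := by
  ext <;> simp

lemma alphaMap_mul (t : ℝ) (v w : Heis) :
    alphaMap t (v * w) = alphaMap t v * alphaMap t w := by
  ext
  · simp; ring
  · simp; ring
  · simp
    linear_combination (w.x * v.y - v.x * w.y) * (sin_sq_add_cos_sq t)

lemma alphaMap_add (s t : ℝ) (v : Heis) :
    alphaMap (s + t) v = alphaMap s (alphaMap t v) := by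
  ext <;> simp [cos_add, sin_add] <;> ring

lemma alphaMap_zero (v : Heis) : alphaMap 0 v = v := by
  ext <;> simp

noncomputable instance : Group Osc where
  mul_assoc a b c := by
    refine Osc.ext (by simp; ring) ?_
    simp only [Osc.mul_v, Osc.mul_t, alphaMap_mul, ← alphaMap_add]
    rw [mul_assoc]
  one_mul a := Osc.ext (by simp) (by simp [alphaMap_zero])
  mul_one a := Osc.ext (by simp) (by simp [alphaMap_one])
  inv_mul_cancel a := by
    refine Osc.ext (by simp) ?_
    simp only [Osc.mul_v, Osc.inv_v, Osc.inv_t, Osc.one_v]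
    rw [← alphaMap_mul, inv_mul_cancel, alphaMap_one]

end Osc

/-- `Heis` carries the standard topology of `ℝ³`. -/
noncomputable instance : TopologicalSpace Heis :=
  TopologicalSpace.induced (fun v => (v.x, v.y, v.z)) inferInstance

/-- `Osc` carries the standard topology of `ℝ⁴`. -/
noncomputable instance : TopologicalSpace Osc :=
  TopologicalSpace.induced (fun g => (g.t, g.v.x, g.v.y, g.v.z)) inferInstance

lemma cos_sin_int (n : ℤ) :
    ∃ a b : ℤ, cos (π / 2 * n) = a ∧ sin (π / 2 * n) = b := by
  induction n using Int.induction_on with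
  | zero => exact ⟨1, 0, by simp, by simp⟩
  | succ n ih =>
    obtain ⟨a, b, ha, hb⟩ := ih
    have h : (((n : ℤ) + 1 : ℤ) : ℝ) = ((n : ℤ) : ℝ) + 1 := by push_cast; ring
    refine ⟨-b, a, ?_, ?_⟩
    · rw [h, mul_add, mul_one, cos_add, ha, hb]
      push_cast
      simp
    · rw [h, mul_add, mul_one, sin_add, ha, hb]
      simp
  | pred n ih =>
    obtain ⟨a, b, ha, hb⟩ := ih
    have h : ((-(n : ℤ) - 1 : ℤ) : ℝ) = ((-(n : ℤ) : ℤ) : ℝ) - 1 := by push_cast; ring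
    refine ⟨b, -a, ?_, ?_⟩
    · rw [h, mul_sub, mul_one, cos_sub, ha, hb]
      simp
    · rw [h, mul_sub, mul_one, sin_sub, ha, hb]
      push_cast
      simp

lemma cos_sin_int' (t : ℝ) (h : ∃ j : ℤ, t = π / 2 * j) :
    ∃ a b : ℤ, cos t = a ∧ sin t = b := by
  obtain ⟨j, rfl⟩ := h
  exact cos_sin_int j

/-- The lattice `θℤ ⋉ Γ_k` in the oscillator group, for `θ` an integer multiple of `π/2`. -/
noncomputable def LamTheta (k : ℕ+) (θ : ℝ) (m : ℤ) (hθ : θ = π / 2 * m) : Subgroup Osc where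
  carrier := {g | (∃ n : ℤ, g.t = θ * n) ∧ (∃ a : ℤ, g.v.x = a) ∧ (∃ b : ℤ, g.v.y = b) ∧
    (∃ c : ℤ, g.v.z = (c : ℝ) / (2 * ((k : ℕ) : ℝ)))}
  one_mem' := ⟨⟨0, by simp⟩, ⟨0, by simp⟩, ⟨0, by simp⟩, ⟨0, by simp⟩⟩
  mul_mem' := by
    rintro g h ⟨⟨n₁, hn₁⟩, ⟨a₁, ha₁⟩, ⟨b₁, hb₁⟩, ⟨c₁, hc₁⟩⟩
      ⟨⟨n₂, hn₂⟩, ⟨a₂, ha₂⟩, ⟨b₂, hb₂⟩, ⟨c₂, hc₂⟩⟩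
    obtain ⟨A, B, hA, hB⟩ := cos_sin_int' g.t ⟨m * n₁, by rw [hn₁, hθ]; push_cast; ring⟩
    have hk : ((k : ℕ) : ℝ) ≠ 0 := by
      exact_mod_cast k.ne_zero
    refine ⟨⟨n₁ + n₂, ?_⟩, ⟨a₁ + (a₂ * A + b₂ * B), ?_⟩, ⟨b₁ + (-(a₂ * B) + b₂ * A), ?_⟩,
      ⟨c₁ + c₂ + (k : ℕ) * (a₁ * (-(a₂ * B) + b₂ * A) - (a₂ * A + b₂ * B) * b₁), ?_⟩⟩
    · simp only [Osc.mul_t, hn₁, hn₂]; push_cast; ring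
    · simp only [Osc.mul_v, Heis.mul_x, alphaMap_x, ha₁, ha₂, hb₂, hA, hB]; push_cast; ring
    · simp only [Osc.mul_v, Heis.mul_y, alphaMap_y, hb₁, ha₂, hb₂, hA, hB]; push_cast; ring
    · simp only [Osc.mul_v, Heis.mul_z, alphaMap_x, alphaMap_y, alphaMap_z,
        ha₁, hb₁, ha₂, hb₂, hc₁, hc₂, hA, hB]
      field_simp
      push_cast
      ring
  inv_mem' := by
    rintro g ⟨⟨n₁, hn₁⟩, ⟨a₁, ha₁⟩, ⟨b₁, hb₁⟩, ⟨c₁, hc₁⟩⟩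
    obtain ⟨A, B, hA, hB⟩ := cos_sin_int' g.t ⟨m * n₁, by rw [hn₁, hθ]; push_cast; ring⟩
    refine ⟨⟨-n₁, ?_⟩, ⟨-(a₁ * A) + b₁ * B, ?_⟩, ⟨-(a₁ * B) - b₁ * A, ?_⟩, ⟨-c₁, ?_⟩⟩
    · simp only [Osc.inv_t, hn₁]; push_cast; ring
    · simp only [Osc.inv_v, alphaMap_x, Heis.inv_x, Heis.inv_y, cos_neg, sin_neg,
        ha₁, hb₁, hA, hB]
      push_cast; ring
    · simp only [Osc.inv_v, alphaMap_y, Heis.inv_x, Heis.inv_y, cos_neg, sin_neg,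
        ha₁, hb₁, hA, hB]
      push_cast; ring
    · simp only [Osc.inv_v, alphaMap_z, Heis.inv_z, hc₁]
      push_cast; ring

/-- The lattice `Λ_{k,0} = 2πℤ × Γ_k`. -/
noncomputable def Lam0 (k : ℕ+) : Subgroup Osc :=
  LamTheta k (2 * π) 4 (by push_cast; ring)

/-- The lattice `Λ_{k,π} = πℤ × Γ_k`. -/
noncomputable def LamPi (k : ℕ+) : Subgroup Osc :=
  LamTheta k π 2 (by push_cast; ring)

/-- The lattice `Λ_{k,π/2} = (π/2)ℤ × Γ_k`. -/
noncomputable def LamPi2 (k : ℕ+) : Subgroup Osc :=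
  LamTheta k (π / 2) 1 (by push_cast; ring)

/-- The lattice `Γ_k = ℤ × ℤ × (1/(2k))ℤ` in the Heisenberg group. -/
noncomputable def Gamma (k : ℕ+) : Subgroup Heis where
  carrier := {v | (∃ a : ℤ, v.x = a) ∧ (∃ b : ℤ, v.y = b) ∧
    (∃ c : ℤ, v.z = (c : ℝ) / (2 * ((k : ℕ) : ℝ)))}
  one_mem' := ⟨⟨0, by simp⟩, ⟨0, by simp⟩, ⟨0, by simp⟩⟩
  mul_mem' := by
    rintro v w ⟨⟨a₁, ha₁⟩, ⟨b₁, hb₁⟩, ⟨c₁, hc₁⟩⟩ ⟨⟨a₂, ha₂⟩, ⟨b₂, hb₂⟩, ⟨c₂, hc₂⟩⟩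
    have hk : ((k : ℕ) : ℝ) ≠ 0 := by exact_mod_cast k.ne_zero
    refine ⟨⟨a₁ + a₂, ?_⟩, ⟨b₁ + b₂, ?_⟩, ⟨c₁ + c₂ + (k : ℕ) * (a₁ * b₂ - a₂ * b₁), ?_⟩⟩
    · simp [ha₁, ha₂]
    · simp [hb₁, hb₂]
    · simp only [Heis.mul_z, ha₁, hb₁, ha₂, hb₂, hc₁, hc₂]
      field_simp
      push_cast
      ring
  inv_mem' := by
    rintro v ⟨⟨a₁, ha₁⟩, ⟨b₁, hb₁⟩, ⟨c₁, hc₁⟩⟩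
    refine ⟨⟨-a₁, by simp [ha₁]⟩, ⟨-b₁, by simp [hb₁]⟩, ⟨-c₁, ?_⟩⟩
    simp only [Heis.inv_z, hc₁]
    push_cast
    ring

/-- The subset `pℤ × qℤ × rℤ × sℤ` of the oscillator group. -/
def prodSet (p q r s : ℝ) : Set Osc :=
  {g | (∃ n : ℤ, g.t = p * n) ∧ (∃ n : ℤ, g.v.x = q * n) ∧
    (∃ n : ℤ, g.v.y = r * n) ∧ (∃ n : ℤ, g.v.z = s * n)}


lemma odd_trig (l : ℕ) (t : ℝ) (h : ∃ n : ℤ, t = (2 * (l : ℝ) + 1) * π * n) :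
    sin t = 0 ∧ ∃ e : ℤ, cos t = e := by
  obtain ⟨n, rfl⟩ := h
  constructor
  · have h1 : (2 * (l : ℝ) + 1) * π * n = ((2 * l + 1) * n : ℤ) * π := by push_cast; ring
    rw [h1]; exact Real.sin_int_mul_pi _
  · obtain ⟨a, b, ha, _⟩ := cos_sin_int' ((2 * (l : ℝ) + 1) * π * n)
      ⟨2 * ((2 * l + 1) * n), by push_cast; ring⟩
    exact ⟨a, ha⟩

lemma odd_trig2 (l : ℕ) (n : ℤ) :
    cos ((2 * (l : ℝ) + 1) * (π * n)) = cos (π * n) ∧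
    sin ((2 * (l : ℝ) + 1) * (π * n)) = 0 ∧ sin (π * n) = 0 := by
  refine ⟨?_, ?_, ?_⟩
  · have h : (2 * (l : ℝ) + 1) * (π * n) = π * n + (l * n : ℤ) * (2 * π) := by
      push_cast; ring
    rw [h, Real.cos_add_int_mul_two_pi]
  · have h : (2 * (l : ℝ) + 1) * (π * n) = ((2 * l + 1) * n : ℤ) * π := by push_cast; ring
    rw [h]; exact Real.sin_int_mul_pi _
  · rw [mul_comm]; exact Real.sin_int_mul_pi _

lemma mem_LamPi (k : ℕ+) (g : Osc) :
    g ∈ LamPi k ↔ (∃ n : ℤ, g.t = π * n) ∧ (∃ a : ℤ, g.v.x = a) ∧ (∃ b : ℤ, g.v.y = b) ∧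
      (∃ c : ℤ, g.v.z = (c : ℝ) / (2 * ((k : ℕ) : ℝ))) := Iff.rfl

/-- The subgroup `(2l+1)πℤ × qℤ × rℤ × (qr/(2k))ℤ` of the oscillator group. -/
noncomputable def S14 (l : ℕ) (k : ℕ+) (q r : ℝ) : Subgroup Osc where
  carrier := prodSet ((2 * (l : ℝ) + 1) * π) q r (q * r / (2 * ((k : ℕ) : ℝ)))
  one_mem' := ⟨⟨0, by simp⟩, ⟨0, by simp⟩, ⟨0, by simp⟩, ⟨0, by simp⟩⟩
  mul_mem' := by
    rintro g h ⟨⟨n₁, hn₁⟩, ⟨a₁, ha₁⟩, ⟨b₁, hb₁⟩, ⟨c₁, hc₁⟩⟩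
      ⟨⟨n₂, hn₂⟩, ⟨a₂, ha₂⟩, ⟨b₂, hb₂⟩, ⟨c₂, hc₂⟩⟩
    have hk : ((k : ℕ) : ℝ) ≠ 0 := by exact_mod_cast k.ne_zero
    obtain ⟨hs, e, he⟩ := odd_trig l g.t ⟨n₁, hn₁⟩
    refine ⟨⟨n₁ + n₂, ?_⟩, ⟨a₁ + a₂ * e, ?_⟩, ⟨b₁ + b₂ * e, ?_⟩,
      ⟨c₁ + c₂ + (k : ℕ) * e * (a₁ * b₂ - a₂ * b₁), ?_⟩⟩
    · simp only [Osc.mul_t, hn₁, hn₂]; push_cast; ring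
    · simp only [Osc.mul_v, Heis.mul_x, alphaMap_x, ha₁, ha₂, hb₂, he, hs]; push_cast; ring
    · simp only [Osc.mul_v, Heis.mul_y, alphaMap_y, hb₁, ha₂, hb₂, he, hs]; push_cast; ring
    · simp only [Osc.mul_v, Heis.mul_z, alphaMap_x, alphaMap_y, alphaMap_z,
        ha₁, hb₁, ha₂, hb₂, hc₁, hc₂, he, hs]
      field_simp
      push_cast
      ring
  inv_mem' := by
    rintro g ⟨⟨n₁, hn₁⟩, ⟨a₁, ha₁⟩, ⟨b₁, hb₁⟩, ⟨c₁, hc₁⟩⟩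
    obtain ⟨hs, e, he⟩ := odd_trig l g.t ⟨n₁, hn₁⟩
    refine ⟨⟨-n₁, ?_⟩, ⟨-(a₁ * e), ?_⟩, ⟨-(b₁ * e), ?_⟩, ⟨-c₁, ?_⟩⟩
    · simp only [Osc.inv_t, hn₁]; push_cast; ring
    · simp only [Osc.inv_v, alphaMap_x, Heis.inv_x, Heis.inv_y, cos_neg, sin_neg,
        ha₁, hb₁, he, hs]
      push_cast; ring
    · simp only [Osc.inv_v, alphaMap_y, Heis.inv_x, Heis.inv_y, cos_neg, sin_neg,
        ha₁, hb₁, he, hs]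
      push_cast; ring
    · simp only [Osc.inv_v, alphaMap_z, Heis.inv_z, hc₁]
      push_cast; ring

lemma mem_S14 (l : ℕ) (k : ℕ+) (q r : ℝ) (g : Osc) :
    g ∈ S14 l k q r ↔ (∃ n : ℤ, g.t = (2 * (l : ℝ) + 1) * π * n) ∧
      (∃ n : ℤ, g.v.x = q * n) ∧ (∃ n : ℤ, g.v.y = r * n) ∧
      (∃ n : ℤ, g.v.z = q * r / (2 * ((k : ℕ) : ℝ)) * n) := Iff.rfl

/-- For a nonnegative integer `l`, a positive integer `k` and positive reals
`q, r`, the set `L = (2l+1)πℤ × qℤ × rℤ × (qr/(2k))ℤ` is a subgroup of the oscillator group,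
and `γ₂(t,x,y,z) = ((2l+1)t, qx, ry, qrz)` is a group isomorphism `Λ_{k,π} → L`. -/
theorem statement14 (l : ℕ) (k : ℕ+) (q r : ℝ) (hq : 0 < q) (hr : 0 < r) :
    ∃ S : Subgroup Osc,
      (S : Set Osc) = prodSet ((2 * (l : ℝ) + 1) * π) q r (q * r / (2 * ((k : ℕ) : ℝ))) ∧
      ∃ φ : LamPi k ≃* S, ∀ g : LamPi k,
        (↑(φ g) : Osc) = ⟨(2 * (l : ℝ) + 1) * (g : Osc).t,
          ⟨q * (g : Osc).v.x, r * (g : Osc).v.y, q * r * (g : Osc).v.z⟩⟩ := by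
  have hk : ((k : ℕ) : ℝ) ≠ 0 := by exact_mod_cast k.ne_zero
  have hq' : q ≠ 0 := hq.ne'
  have hr' : r ≠ 0 := hr.ne'
  have hl : (2 * (l : ℝ) + 1) ≠ 0 := by positivity
  refine ⟨S14 l k q r, rfl, ?_⟩
  exact ⟨
    { toFun := fun g => ⟨⟨(2 * (l : ℝ) + 1) * (g : Osc).t,
        ⟨q * (g : Osc).v.x, r * (g : Osc).v.y, q * r * (g : Osc).v.z⟩⟩, by
          obtain ⟨⟨n, hn⟩, ⟨a, ha⟩, ⟨b, hb⟩, ⟨c, hc⟩⟩ := (mem_LamPi k _).1 g.2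
          refine (mem_S14 l k q r _).2
            ⟨⟨n, by rw [hn]; ring⟩, ⟨a, by rw [ha]⟩, ⟨b, by rw [hb]⟩,
              ⟨c, by rw [hc]; field_simp⟩⟩⟩
      invFun := fun s => ⟨⟨(s : Osc).t / (2 * (l : ℝ) + 1),
        ⟨(s : Osc).v.x / q, (s : Osc).v.y / r, (s : Osc).v.z / (q * r)⟩⟩, by
          obtain ⟨⟨n, hn⟩, ⟨a, ha⟩, ⟨b, hb⟩, ⟨c, hc⟩⟩ := (mem_S14 l k q r _).1 s.2
          refine (mem_LamPi k _).2
            ⟨⟨n, by rw [hn]; field_simp⟩, ⟨a, by rw [ha]; field_simp⟩,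
              ⟨b, by rw [hb]; field_simp⟩, ⟨c, by rw [hc]; field_simp⟩⟩⟩
      left_inv := fun g => Subtype.ext (by
        ext
        · exact mul_div_cancel_left₀ _ hl
        · exact mul_div_cancel_left₀ _ hq'
        · exact mul_div_cancel_left₀ _ hr'
        · exact mul_div_cancel_left₀ _ (mul_ne_zero hq' hr'))
      right_inv := fun s => Subtype.ext (by
        ext
        · exact mul_div_cancel₀ _ hl
        · exact mul_div_cancel₀ _ hq'
        · exact mul_div_cancel₀ _ hr'
        · exact mul_div_cancel₀ _ (mul_ne_zero hq' hr'))
      map_mul' := fun g h => Subtype.ext (by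
        obtain ⟨⟨n₁, hn₁⟩, -⟩ := (mem_LamPi k _).1 g.2
        obtain ⟨hc, hs1, hs2⟩ := odd_trig2 l n₁
        have hmul : ((g * h : LamPi k) : Osc) = (g : Osc) * (h : Osc) := rfl
        ext
        · show (2 * (l : ℝ) + 1) * ((g * h : LamPi k) : Osc).t = _
          rw [hmul]; simp only [MulMemClass.mk_mul_mk, Osc.mul_t]; ring
        · show q * ((g * h : LamPi k) : Osc).v.x = _
          rw [hmul]
          simp only [MulMemClass.mk_mul_mk, Osc.mul_t, Osc.mul_v, Heis.mul_x, alphaMap_x, hn₁, hc, hs1, hs2]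
          ring
        · show r * ((g * h : LamPi k) : Osc).v.y = _
          rw [hmul]
          simp only [MulMemClass.mk_mul_mk, Osc.mul_t, Osc.mul_v, Heis.mul_y, alphaMap_y, hn₁, hc, hs1, hs2]
          ring
        · show q * r * ((g * h : LamPi k) : Osc).v.z = _
          rw [hmul]
          simp only [MulMemClass.mk_mul_mk, Osc.mul_t, Osc.mul_v, Heis.mul_z, alphaMap_x, alphaMap_y,
            alphaMap_z, hn₁, hc, hs1, hs2]
          ring) },
    fun g => rfl⟩
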